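/- Let n ≥ 2. For j = 1, …, p let H_j = G_j + Σ_{T} a_{j,T} · Z_T, where each G_j is a Hermitian U(1)-invariant 2-local complex matrix, the sum runs over 3-element subsets T of Fin n, and the coefficients a_{j,T} are real. Set V := Matrix.exp(-i·H_1)·…·Matrix.exp(-i·H_p). Then Δ3(V) ≡ -8 · Σ_{j=1}^{p} Σ_{T} a_{j,T} (mod 2π). -/

import Mathlib

open Finset Matrix

noncomputable section

/-- Hamming weight of a basis label. -/
def hw {n : ℕ} (z : Fin n → Bool) : ℕ := (Finset.univ.filter fun i => z i = true).card

/-- The sign `(-1)^{z i}` of a bit. -/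
def sgn (b : Bool) : ℂ := if b = true then -1 else 1

/-- The operator `Z_T = ∏_{j ∈ T} Z_j`. -/
def Zmat (n : ℕ) (T : Finset (Fin n)) : Matrix (Fin n → Bool) (Fin n → Bool) ℂ :=
  Matrix.diagonal fun z => ∏ j ∈ T, sgn (z j)

/-- A matrix is U(1)-invariant if it vanishes off the Hamming-weight blocks. -/
def U1Invariant {n : ℕ} (M : Matrix (Fin n → Bool) (Fin n → Bool) ℂ) : Prop :=
  ∀ z z', hw z ≠ hw z' → M z z' = 0

/-- The weight-`m` block `M_m` of a matrix `M`. -/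
def block {n : ℕ} (M : Matrix (Fin n → Bool) (Fin n → Bool) ℂ) (m : ℕ) :
    Matrix {z : Fin n → Bool // hw z = m} {z : Fin n → Bool // hw z = m} ℂ :=
  fun a b => M a.1 b.1

/-- The phase `θ_m(V) = arg det(V_m)`. -/
def theta {n : ℕ} (V : Matrix (Fin n → Bool) (Fin n → Bool) ℂ) (m : ℕ) : ℝ :=
  Complex.arg (Matrix.det (block V m))

/-- The phase `Δ3(V) = θ_{n-1} - θ_1 - (n-2)(θ_n - θ_0)`. -/
def Delta3 {n : ℕ} (V : Matrix (Fin n → Bool) (Fin n → Bool) ℂ) : ℝ :=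
  theta V (n-1) - theta V 1 - ((n : ℝ) - 2) * (theta V n - theta V 0)

/-- `x ≡ y (mod 2π)`. -/
def Mod2Pi (x y : ℝ) : Prop := ∃ j : ℤ, x - y = 2 * Real.pi * j

/-- A matrix `M` is supported on `S ⊆ Fin n` if it acts only on the qubits in `S`. -/
def SupportedOn {n : ℕ} (S : Finset (Fin n)) (M : Matrix (Fin n → Bool) (Fin n → Bool) ℂ) : Prop :=
  ∃ f : ({ i // i ∈ S } → Bool) → ({ i // i ∈ S } → Bool) → ℂ,
    ∀ z z' : Fin n → Bool,
      M z z' = if ∀ i ∉ S, z i = z' i then f (fun i => z i.1) (fun i => z' i.1) else 0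

/-- A matrix is `k`-local if it is a finite sum of matrices each supported on a
subset of size at most `k`. -/
def KLocal {n : ℕ} (k : ℕ) (M : Matrix (Fin n → Bool) (Fin n → Bool) ℂ) : Prop :=
  ∃ (p : ℕ) (g : Fin p → Matrix (Fin n → Bool) (Fin n → Bool) ℂ) (S : Fin p → Finset (Fin n)),
    (∀ i, (S i).card ≤ k ∧ SupportedOn (S i) (g i)) ∧ M = ∑ i, g i

namespace Scratch

variable {n : ℕ}

abbrev Mat (n : ℕ) := Matrix (Fin n → Bool) (Fin n → Bool) ℂ

/-! ### basic weight vectors -/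

def ebit (i : Fin n) : Fin n → Bool := fun j => decide (j = i)
def nbit (i : Fin n) : Fin n → Bool := fun j => !decide (j = i)

lemma ebit_injective : Function.Injective (ebit (n := n)) := by
  intro i i' h
  have := congrFun h i
  simpa [ebit] using this.symm

lemma nbit_injective : Function.Injective (nbit (n := n)) := by
  intro i i' h
  have := congrFun h i
  simpa [nbit] using this.symm

lemma hw_ebit (i : Fin n) : hw (ebit i) = 1 := by
  unfold hw
  rw [Finset.card_eq_one]
  exact ⟨i, by ext j; simp [ebit]⟩

lemma hw_nbit (i : Fin n) : hw (nbit i) = n - 1 := by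
  unfold hw
  have : (Finset.univ.filter fun j => nbit i j = true) = Finset.univ.erase i := by
    ext j; simp [nbit]
  rw [this, Finset.card_erase_of_mem (Finset.mem_univ i)]
  simp

lemma hw_false : hw (fun _ : Fin n => false) = 0 := by
  simp [hw]

lemma hw_true : hw (fun _ : Fin n => true) = n := by
  simp [hw]

lemma hw_eq_zero_iff {z : Fin n → Bool} : hw z = 0 ↔ z = fun _ => false := by
  constructor
  · intro h
    funext j
    have := Finset.card_eq_zero.mp h
    have hj : j ∉ Finset.univ.filter fun i => z i = true := by simp [this]
    simpa using hj
  · rintro rfl; exact hw_false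

lemma hw_eq_n_iff {z : Fin n → Bool} : hw z = n ↔ z = fun _ => true := by
  constructor
  · intro h
    have huniv : (Finset.univ.filter fun i => z i = true) = Finset.univ := by
      apply Finset.eq_univ_of_card
      simpa [hw] using h
    funext j
    have hj : j ∈ Finset.univ.filter fun i => z i = true := by rw [huniv]; exact Finset.mem_univ j
    simpa using hj
  · rintro rfl; exact hw_true

lemma hw_eq_one_iff {z : Fin n → Bool} : hw z = 1 ↔ ∃ i, z = ebit i := by
  constructor
  · intro h
    obtain ⟨i, hi⟩ := Finset.card_eq_one.mp h
    refine ⟨i, funext fun j => ?_⟩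
    have hmem : z j = true ↔ j = i := by
      have h' : j ∈ Finset.univ.filter (fun i => z i = true) ↔ j ∈ ({i} : Finset (Fin n)) := by
        rw [hi]
      simpa using h'
    by_cases hji : j = i
    · subst hji; simp [ebit, hmem.mpr rfl]
    · have hne : z j ≠ true := fun hz => hji (hmem.mp hz)
      have hzj : z j = false := by revert hne; cases z j <;> simp
      simp [ebit, hji, hzj]
  · rintro ⟨i, rfl⟩; exact hw_ebit i

lemma hw_add_card_false (z : Fin n → Bool) :
    hw z + (Finset.univ.filter fun j => z j = false).card = n := by
  have h := Finset.card_filter_add_card_filter_not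
    (s := (Finset.univ : Finset (Fin n))) (p := fun j => z j = true)
  have h2 : (Finset.univ.filter fun a => ¬ z a = true) = Finset.univ.filter fun j => z j = false := by
    ext j; cases hz : z j <;> simp [hz]
  rw [h2] at h
  simpa [hw] using h

lemma hw_eq_pred_iff (hn : 1 ≤ n) {z : Fin n → Bool} : hw z = n - 1 ↔ ∃ i, z = nbit i := by
  constructor
  · intro h
    have hcard := hw_add_card_false z
    have hle : hw z ≤ n := by omega
    have h1 : (Finset.univ.filter fun j => z j = false).card = 1 := by omega
    obtain ⟨i, hi⟩ := Finset.card_eq_one.mp h1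
    refine ⟨i, funext fun j => ?_⟩
    have hmem : z j = false ↔ j = i := by
      have h' : j ∈ Finset.univ.filter (fun j => z j = false) ↔ j ∈ ({i} : Finset (Fin n)) := by
        rw [hi]
      simpa using h'
    by_cases hji : j = i
    · subst hji; simp [nbit, hmem.mpr rfl]
    · have hne : z j ≠ false := fun hz => hji (hmem.mp hz)
      have hzj : z j = true := by revert hne; cases z j <;> simp
      simp [nbit, hji, hzj]
  · rintro ⟨i, rfl⟩; exact hw_nbit i

/-! ### traces of blocks -/

lemma trace_block (M : Mat n) (m : ℕ) :
    (block M m).trace = ∑ z ∈ Finset.univ.filter (fun z => hw z = m), M z z := by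
  rw [Matrix.trace]
  rw [Finset.sum_subtype (p := fun z => hw z = m) (Finset.univ.filter fun z => hw z = m)
    (by intro z; simp) (fun z => M z z)]
  rfl

lemma trace_block_zero (M : Mat n) :
    (block M 0).trace = M (fun _ => false) (fun _ => false) := by
  rw [trace_block]
  have : (Finset.univ.filter fun z : Fin n → Bool => hw z = 0) = {fun _ => false} := by
    ext z; simp [hw_eq_zero_iff]
  rw [this, Finset.sum_singleton]

lemma trace_block_n (M : Mat n) :
    (block M n).trace = M (fun _ => true) (fun _ => true) := by
  rw [trace_block]
  have : (Finset.univ.filter fun z : Fin n → Bool => hw z = n) = {fun _ => true} := by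
    ext z; simp [hw_eq_n_iff]
  rw [this, Finset.sum_singleton]

lemma trace_block_one (M : Mat n) :
    (block M 1).trace = ∑ i : Fin n, M (ebit i) (ebit i) := by
  rw [trace_block]
  have himg : (Finset.univ.filter fun z : Fin n → Bool => hw z = 1)
      = Finset.univ.image ebit := by
    ext z
    simp only [Finset.mem_filter, Finset.mem_univ, true_and, Finset.mem_image]
    rw [hw_eq_one_iff]
    simp [eq_comm]
  rw [himg, Finset.sum_image (fun i _ i' _ h => ebit_injective h)]

lemma trace_block_pred (hn : 1 ≤ n) (M : Mat n) :
    (block M (n-1)).trace = ∑ i : Fin n, M (nbit i) (nbit i) := by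
  rw [trace_block]
  have himg : (Finset.univ.filter fun z : Fin n → Bool => hw z = n - 1)
      = Finset.univ.image nbit := by
    ext z
    simp only [Finset.mem_filter, Finset.mem_univ, true_and, Finset.mem_image]
    rw [hw_eq_pred_iff hn]
    simp [eq_comm]
  rw [himg, Finset.sum_image (fun i _ i' _ h => nbit_injective h)]


/-! ### U(1)-invariance and block algebra -/

lemma U1_one : U1Invariant (1 : Mat n) := by
  intro z z' h
  have : z ≠ z' := fun he => h (he ▸ rfl)
  simp [Matrix.one_apply, this]

lemma U1_mul {M N : Mat n} (hM : U1Invariant M) (hN : U1Invariant N) :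
    U1Invariant (M * N) := by
  intro z z' h
  rw [Matrix.mul_apply]
  apply Finset.sum_eq_zero
  intro y _
  by_cases hy : hw z = hw y
  · rw [hN y z' (hy ▸ h), mul_zero]
  · rw [hM z y hy, zero_mul]

lemma U1_pow {M : Mat n} (hM : U1Invariant M) (k : ℕ) : U1Invariant (M ^ k) := by
  induction k with
  | zero => simpa using U1_one
  | succ k ih => rw [pow_succ]; exact U1_mul ih hM

lemma U1_smul {M : Mat n} (hM : U1Invariant M) (c : ℂ) : U1Invariant (c • M) := by
  intro z z' h
  simp [hM z z' h]

lemma U1_add {M N : Mat n} (hM : U1Invariant M) (hN : U1Invariant N) :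
    U1Invariant (M + N) := by
  intro z z' h
  simp [hM z z' h, hN z z' h]

lemma U1_diagonal (v : (Fin n → Bool) → ℂ) : U1Invariant (Matrix.diagonal v) := by
  intro z z' h
  have : z ≠ z' := fun he => h (he ▸ rfl)
  simp [Matrix.diagonal_apply_ne _ this]

lemma U1_sum {ι : Type*} (s : Finset ι) (f : ι → Mat n)
    (hf : ∀ i ∈ s, U1Invariant (f i)) : U1Invariant (∑ i ∈ s, f i) := by
  intro z z' h
  rw [Matrix.sum_apply]
  exact Finset.sum_eq_zero fun i hi => hf i hi z z' h

lemma block_apply (M : Mat n) (m : ℕ) (a b : {z : Fin n → Bool // hw z = m}) :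
    block M m a b = M a.1 b.1 := rfl

lemma block_add (M N : Mat n) (m : ℕ) : block (M + N) m = block M m + block N m := rfl

lemma block_smul (c : ℂ) (M : Mat n) (m : ℕ) : block (c • M) m = c • block M m := rfl

lemma block_one (m : ℕ) : block (1 : Mat n) m = 1 := by
  ext a b
  by_cases h : a = b
  · subst h; simp [block, Matrix.one_apply]
  · have : a.1 ≠ b.1 := fun he => h (Subtype.ext he)
    simp [block, Matrix.one_apply, h, this]

lemma block_mul {M : Mat n} (N : Mat n) (hM : U1Invariant M) (m : ℕ) :
    block (M * N) m = block M m * block N m := by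
  ext a b
  rw [block_apply, Matrix.mul_apply, Matrix.mul_apply]
  have hsub : ∑ y ∈ Finset.univ.filter (fun z => hw z = m), M a.1 y * N y b.1
      = ∑ j : {z : Fin n → Bool // hw z = m}, block M m a j * block N m j b :=
    Finset.sum_subtype _ (by intro z; simp) _
  rw [← hsub, ← Finset.sum_filter_add_sum_filter_not Finset.univ (fun y => hw y = m)
    (fun y => M a.1 y * N y b.1)]
  have hzero : ∑ y ∈ Finset.univ.filter (fun y => ¬ hw y = m), M a.1 y * N y b.1 = 0 := by
    apply Finset.sum_eq_zero
    intro y hy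
    have : hw a.1 ≠ hw y := by
      rw [a.2]
      exact fun he => (Finset.mem_filter.mp hy).2 he.symm
    rw [hM a.1 y this, zero_mul]
  rw [hzero, add_zero]

lemma block_pow {M : Mat n} (hM : U1Invariant M) (m k : ℕ) :
    block (M ^ k) m = block M m ^ k := by
  induction k with
  | zero => simpa using block_one m
  | succ k ih =>
      rw [pow_succ, pow_succ, block_mul M (U1_pow hM k) m, ih]

/-! ### exponentials -/

lemma summable_exp_series (M : Mat n) :
    Summable (fun k : ℕ => ((Nat.factorial k : ℂ))⁻¹ • M ^ k) := by
  letI : SeminormedRing (Mat n) := Matrix.linftyOpSemiNormedRing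
  letI : NormedRing (Mat n) := Matrix.linftyOpNormedRing
  letI : NormedAlgebra ℂ (Mat n) := Matrix.linftyOpNormedAlgebra
  exact NormedSpace.expSeries_summable' (𝕂 := ℂ) M

lemma U1_exp {M : Mat n} (hM : U1Invariant M) :
    U1Invariant (NormedSpace.exp M) := by
  intro z z' h
  rw [NormedSpace.exp_eq_tsum ℂ]
  let E : Mat n →+ ℂ :=
    { toFun := fun A => A z z', map_zero' := rfl, map_add' := fun _ _ => rfl }
  have hE : Continuous E := (continuous_apply z').comp (continuous_apply z)
  have hmap := ((summable_exp_series M).hasSum.map E hE).tsum_eq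
  have hterm : (⇑E ∘ fun k : ℕ => ((Nat.factorial k : ℂ))⁻¹ • M ^ k) = fun _ => (0 : ℂ) := by
    funext k
    show (((Nat.factorial k : ℂ))⁻¹ • M ^ k) z z' = 0
    rw [Matrix.smul_apply, U1_pow hM k z z' h, smul_zero]
  calc (∑' k : ℕ, ((Nat.factorial k : ℂ))⁻¹ • M ^ k) z z'
      = ∑' k : ℕ, (⇑E ∘ fun k : ℕ => ((Nat.factorial k : ℂ))⁻¹ • M ^ k) k := hmap.symm
    _ = 0 := by rw [hterm, tsum_zero]

lemma block_exp {M : Mat n} (hM : U1Invariant M) (m : ℕ) :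
    block (NormedSpace.exp M) m = NormedSpace.exp (block M m) := by
  rw [NormedSpace.exp_eq_tsum ℂ, NormedSpace.exp_eq_tsum ℂ]
  let B : Mat n →+ Matrix {z : Fin n → Bool // hw z = m} {z : Fin n → Bool // hw z = m} ℂ :=
    { toFun := fun A => block A m, map_zero' := rfl, map_add' := fun _ _ => rfl }
  have hB : Continuous B := by
    apply continuous_matrix
    intro a b
    exact (continuous_apply b.1).comp (continuous_apply a.1)
  have hmap := ((summable_exp_series M).hasSum.map B hB).tsum_eq
  calc block (∑' k : ℕ, ((Nat.factorial k : ℂ))⁻¹ • M ^ k) m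
      = ∑' k : ℕ, (⇑B ∘ fun k : ℕ => ((Nat.factorial k : ℂ))⁻¹ • M ^ k) k := hmap.symm
    _ = ∑' k : ℕ, ((Nat.factorial k : ℂ))⁻¹ • (block M m) ^ k := by
        apply tsum_congr
        intro k
        show block (((Nat.factorial k : ℂ))⁻¹ • M ^ k) m = _
        rw [block_smul, block_pow hM]

lemma block_list_prod (m : ℕ) :
    ∀ L : List (Mat n), (∀ A ∈ L, U1Invariant A) →
      block L.prod m = (L.map (fun A => block A m)).prod := by
  intro L
  induction L with
  | nil => intro _; simpa using block_one m
  | cons A L ih =>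
      intro hmem
      rw [List.prod_cons, List.map_cons, List.prod_cons,
        block_mul _ (hmem A (List.mem_cons_self)) m,
        ih (fun B hB => hmem B (List.mem_cons_of_mem A hB))]

/-! ### Hermitian blocks and determinants of exponentials -/

lemma block_isHermitian {M : Mat n} (hM : M.IsHermitian) (m : ℕ) :
    (block M m).IsHermitian := by
  ext a b
  show star (block M m b a) = block M m a b
  rw [block_apply, block_apply, ← Matrix.conjTranspose_apply, hM]

lemma det_exp_neg_I_smul {N : Type*} [Fintype N] [DecidableEq N]
    {B : Matrix N N ℂ} (hB : B.IsHermitian) :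
    ∃ r : ℝ, B.trace = (r : ℂ) ∧
      Matrix.det (NormedSpace.exp ((-Complex.I) • B)) = Complex.exp ((-r : ℝ) * Complex.I) := by
  set U : Matrix N N ℂ := (hB.eigenvectorUnitary : Matrix N N ℂ) with hU
  have hmem := hB.eigenvectorUnitary.2
  have hstar : star U * U = 1 := (Unitary.mem_iff.mp hmem).1
  have hUnit : IsUnit U := by
    have := invertibleOfLeftInverse U (star U) hstar
    exact isUnit_of_invertible U
  have hinv : U⁻¹ = star U := Matrix.inv_eq_left_inv hstar
  set D : Matrix N N ℂ := Matrix.diagonal (RCLike.ofReal ∘ hB.eigenvalues) with hD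
  refine ⟨∑ i, hB.eigenvalues i, ?_, ?_⟩
  · conv_lhs => rw [hB.spectral_theorem, Unitary.conjStarAlgAut_apply]
    rw [Matrix.trace_mul_comm, ← mul_assoc, hstar, one_mul]
    rw [← hD, Matrix.trace_diagonal]
    push_cast
    rfl
  · have key : (-Complex.I) • B = U * ((-Complex.I) • D) * U⁻¹ := by
      conv_lhs => rw [hB.spectral_theorem, Unitary.conjStarAlgAut_apply]
      rw [hinv, ← hD, ← hU, Matrix.mul_smul, Matrix.smul_mul]
    rw [key, Matrix.exp_conj U ((-Complex.I) • D) hUnit, Matrix.det_conj hUnit]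
    have hdiag : (-Complex.I) • D = Matrix.diagonal (fun i => (-Complex.I) * (hB.eigenvalues i : ℂ)) := by
      rw [hD, ← Matrix.diagonal_smul]
      congr 1
    rw [hdiag, Matrix.exp_diagonal, Matrix.det_diagonal]
    have hpt : ∀ i, (NormedSpace.exp fun i => (-Complex.I) * (hB.eigenvalues i : ℂ)) i
        = Complex.exp ((-Complex.I) * (hB.eigenvalues i : ℂ)) := by
      intro i
      rw [Pi.coe_exp, ← Complex.exp_eq_exp_ℂ]
    rw [Finset.prod_congr rfl (fun i _ => hpt i)]
    rw [← Complex.exp_sum]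
    congr 1
    rw [← Finset.mul_sum]
    push_cast
    ring

/-! ### the linear functional tau -/

def tauC (M : Mat n) : ℂ :=
  (block M (n-1)).trace - (block M 1).trace
    - ((n : ℂ) - 2) * ((block M n).trace - (block M 0).trace)

lemma block_zero (m : ℕ) : block (0 : Mat n) m = 0 := rfl

lemma tauC_add (M N : Mat n) : tauC (M + N) = tauC M + tauC N := by
  simp only [tauC, block_add, Matrix.trace_add]
  ring

lemma tauC_smul (c : ℂ) (M : Mat n) : tauC (c • M) = c * tauC M := by
  simp only [tauC, block_smul, Matrix.trace_smul, smul_eq_mul]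
  ring

lemma tauC_sum {ι : Type*} (s : Finset ι) (f : ι → Mat n) :
    tauC (∑ i ∈ s, f i) = ∑ i ∈ s, tauC (f i) := by
  classical
  induction s using Finset.induction_on with
  | empty => simp [tauC, block_zero]
  | insert _ _ hnotmem ih =>
      rw [Finset.sum_insert hnotmem, Finset.sum_insert hnotmem, tauC_add, ih]

lemma tauC_supported (hn : 2 ≤ n) (S : Finset (Fin n)) (hS : S.card ≤ 2)
    {g : Mat n} (hg : SupportedOn S g) : tauC g = 0 := by
  obtain ⟨f, hf⟩ := hg
  have hd : ∀ z z' : Fin n → Bool, (∀ i ∈ S, z i = z' i) → g z z = g z' z' := by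
    intro z z' h
    rw [hf z z, hf z' z', if_pos (fun _ _ => rfl), if_pos (fun _ _ => rfl)]
    congr 1 <;> · funext i; exact h i.1 i.2
  have hn1 : 1 ≤ n := by omega
  set d0 := g (fun _ => false) (fun _ => false) with hd0
  set d1 := g (fun _ => true) (fun _ => true) with hd1
  have hSn : S.card ≤ n := le_trans (Finset.card_le_univ S) (by simp)
  -- compute the four traces
  have t0 : (block g 0).trace = d0 := trace_block_zero g
  have tn : (block g n).trace = d1 := trace_block_n g
  have hsplit : ∀ F : (Fin n → Bool) → ℂ,
      ∑ i : Fin n, F (ebit i) = ∑ i ∈ S, F (ebit i) + ∑ i ∈ Sᶜ, F (ebit i) := by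
    intro F
    exact (Finset.sum_add_sum_compl S _).symm
  have hcompl_e : ∀ i ∈ Sᶜ, g (ebit i) (ebit i) = d0 := by
    intro i hi
    have hiS : i ∉ S := Finset.mem_compl.mp hi
    apply hd
    intro j hj
    have : j ≠ i := fun he => hiS (he ▸ hj)
    simp [ebit, this]
  have hcompl_n : ∀ i ∈ Sᶜ, g (nbit i) (nbit i) = d1 := by
    intro i hi
    have hiS : i ∉ S := Finset.mem_compl.mp hi
    apply hd
    intro j hj
    have : j ≠ i := fun he => hiS (he ▸ hj)
    simp [nbit, this]
  have t1 : (block g 1).trace = (∑ i ∈ S, g (ebit i) (ebit i)) + (Sᶜ.card : ℂ) * d0 := by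
    rw [trace_block_one, (Finset.sum_add_sum_compl S (fun i => g (ebit i) (ebit i))).symm,
      Finset.sum_congr rfl hcompl_e, Finset.sum_const, nsmul_eq_mul]
  have tp : (block g (n-1)).trace = (∑ i ∈ S, g (nbit i) (nbit i)) + (Sᶜ.card : ℂ) * d1 := by
    rw [trace_block_pred hn1, (Finset.sum_add_sum_compl S (fun i => g (nbit i) (nbit i))).symm,
      Finset.sum_congr rfl hcompl_n, Finset.sum_const, nsmul_eq_mul]
  have hcc : (Sᶜ.card : ℂ) = (n : ℂ) - (S.card : ℂ) := by
    rw [Finset.card_compl, Nat.cast_sub (by simpa using hSn)]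
    simp
  unfold tauC
  rw [t0, tn, t1, tp, hcc]
  have h012 : S.card = 0 ∨ S.card = 1 ∨ S.card = 2 := by omega
  rcases h012 with h0 | h1 | h2
  · obtain rfl : S = ∅ := Finset.card_eq_zero.mp h0
    have e10 : d1 = d0 := hd _ _ (fun j hj => absurd hj (by simp))
    simp only [Finset.sum_empty, Finset.card_empty, Nat.cast_zero, e10]
    ring
  · obtain ⟨x, rfl⟩ := Finset.card_eq_one.mp h1
    have e1 : g (ebit x) (ebit x) = d1 := by
      apply hd; intro j hj
      have hjx : j = x := Finset.mem_singleton.mp hj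
      simp [ebit, hjx]
    have e2 : g (nbit x) (nbit x) = d0 := by
      apply hd; intro j hj
      have hjx : j = x := Finset.mem_singleton.mp hj
      simp [nbit, hjx]
    simp only [Finset.sum_singleton, Finset.card_singleton, Nat.cast_one, e1, e2]
    ring
  · obtain ⟨x, y, hxy, rfl⟩ := Finset.card_eq_two.mp h2
    have hyx : y ≠ x := fun h => hxy h.symm
    have exy : g (nbit x) (nbit x) = g (ebit y) (ebit y) := by
      apply hd; intro j hj
      rcases Finset.mem_insert.mp hj with rfl | hj'
      · simp [nbit, ebit, hxy]
      · have hjy : j = y := Finset.mem_singleton.mp hj'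
        subst hjy
        simp [nbit, ebit, hyx]
    have eyx : g (nbit y) (nbit y) = g (ebit x) (ebit x) := by
      apply hd; intro j hj
      rcases Finset.mem_insert.mp hj with rfl | hj'
      · simp [nbit, ebit, hxy]
      · have hjy : j = y := Finset.mem_singleton.mp hj'
        subst hjy
        simp [nbit, ebit, hyx]
    rw [Finset.sum_pair hxy, Finset.sum_pair hxy, exy, eyx, Finset.card_pair hxy]
    push_cast
    ring


lemma sgn_ebit (i j : Fin n) : sgn (ebit i j) = if j = i then (-1 : ℂ) else 1 := by
  by_cases h : j = i <;> simp [sgn, ebit, h]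

lemma sgn_nbit (i j : Fin n) : sgn (nbit i j) = (if j = i then (-1 : ℂ) else 1) * (-1) := by
  by_cases h : j = i <;> simp [sgn, nbit, h]

lemma sum_ite_mem_univ (T : Finset (Fin n)) (c d : ℂ) :
    ∑ i : Fin n, (if i ∈ T then c else d) = T.card * c + ((n : ℂ) - T.card) * d := by
  rw [← Finset.sum_filter_add_sum_filter_not Finset.univ (fun i => i ∈ T)]
  have h1 : Finset.univ.filter (fun i => i ∈ T) = T := by ext i; simp
  have h2 : Finset.univ.filter (fun i => i ∉ T) = Tᶜ := by ext i; simp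
  rw [Finset.sum_congr h1 (fun i hi => if_pos hi),
    Finset.sum_congr h2 (fun i hi => if_neg (Finset.mem_compl.mp hi)),
    Finset.sum_const, Finset.sum_const, Finset.card_compl, nsmul_eq_mul, nsmul_eq_mul,
    Nat.cast_sub (by simpa using Finset.card_le_univ T)]
  simp

lemma tauC_Zmat (T : Finset (Fin n)) (hT : T.card = 3) :
    tauC (Zmat n T) = 8 := by
  have hn3 : 3 ≤ n := by
    have := Finset.card_le_univ T
    simp only [Finset.card_univ, Fintype.card_fin] at this
    omega
  have hn1 : 1 ≤ n := by omega
  have hdiag : ∀ z : Fin n → Bool, Zmat n T z z = ∏ j ∈ T, sgn (z j) := by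
    intro z; simp [Zmat]
  have t0 : (block (Zmat n T) 0).trace = 1 := by
    rw [trace_block_zero, hdiag]
    simp [sgn]
  have tn : (block (Zmat n T) n).trace = -1 := by
    rw [trace_block_n, hdiag]
    simp [sgn, hT, Finset.prod_const]
    norm_num
  have t1 : (block (Zmat n T) 1).trace = (n : ℂ) - 6 := by
    rw [trace_block_one]
    have hterm : ∀ i : Fin n, Zmat n T (ebit i) (ebit i) = if i ∈ T then (-1 : ℂ) else 1 := by
      intro i
      rw [hdiag]
      simp_rw [sgn_ebit]
      exact Finset.prod_ite_eq' T i (fun _ => (-1 : ℂ))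
    rw [Finset.sum_congr rfl (fun i _ => hterm i), sum_ite_mem_univ, hT]
    push_cast
    ring
  have tp : (block (Zmat n T) (n-1)).trace = 6 - (n : ℂ) := by
    rw [trace_block_pred hn1]
    have hterm : ∀ i : Fin n, Zmat n T (nbit i) (nbit i) = if i ∈ T then (1 : ℂ) else -1 := by
      intro i
      rw [hdiag]
      simp_rw [sgn_nbit]
      rw [Finset.prod_mul_distrib, Finset.prod_ite_eq' T i (fun _ => (-1 : ℂ)),
        Finset.prod_const, hT]
      by_cases h : i ∈ T <;> simp [h] <;> ring
    rw [Finset.sum_congr rfl (fun i _ => hterm i), sum_ite_mem_univ, hT]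
    push_cast
    ring
  unfold tauC
  rw [t0, tn, t1, tp]
  ring


lemma Zmat_isHermitian (T : Finset (Fin n)) : (Zmat n T).IsHermitian := by
  have hv : star (fun z : Fin n → Bool => ∏ j ∈ T, sgn (z j))
      = fun z : Fin n → Bool => ∏ j ∈ T, sgn (z j) := by
    funext z
    rw [Pi.star_apply, star_prod]
    apply Finset.prod_congr rfl
    intro j _
    cases z j <;> simp [sgn]
  unfold Zmat
  rw [Matrix.IsHermitian, Matrix.diagonal_conjTranspose, hv]

lemma tauC_of_KLocal (hn : 2 ≤ n) {M : Mat n} (h : KLocal 2 M) : tauC M = 0 := by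
  obtain ⟨p, g, S, hgs, rfl⟩ := h
  rw [tauC_sum]
  exact Finset.sum_eq_zero fun i _ => tauC_supported hn (S i) (hgs i).1 (hgs i).2

lemma arg_exp_real_mul_I (x : ℝ) :
    ∃ k : ℤ, Complex.arg (Complex.exp ((x : ℂ) * Complex.I)) = x + 2 * Real.pi * k := by
  have habs : ‖Complex.exp ((x : ℂ) * Complex.I)‖ = 1 :=
    Complex.norm_exp_ofReal_mul_I x
  have h1 : Complex.exp ((Complex.arg (Complex.exp ((x : ℂ) * Complex.I)) : ℂ) * Complex.I)
      = Complex.exp ((x : ℂ) * Complex.I) := by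
    conv_rhs => rw [← Complex.norm_mul_exp_arg_mul_I (Complex.exp ((x : ℂ) * Complex.I))]
    rw [habs, Complex.ofReal_one, one_mul]
  obtain ⟨k, hk⟩ := Complex.exp_eq_exp_iff_exists_int.mp h1
  refine ⟨k, ?_⟩
  have him := congrArg Complex.im hk
  simp only [Complex.mul_im, Complex.ofReal_re, Complex.I_im, Complex.ofReal_im, Complex.I_re,
    mul_zero, mul_one, zero_mul, add_zero, Complex.add_im, Complex.intCast_re,
    Complex.intCast_im, Complex.mul_re, Complex.re_ofNat, Complex.im_ofNat, zero_add,
    Complex.ofReal_mul, sub_zero] at him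
  rw [him]
  ring

lemma det_list_ofFn {N : Type*} [Fintype N] [DecidableEq N] {p : ℕ} (f : Fin p → Matrix N N ℂ) :
    Matrix.det (List.ofFn f).prod = ∏ j, Matrix.det (f j) := by
  rw [← Matrix.coe_detMonoidHom, MonoidHom.map_list_prod, List.map_ofFn, List.prod_ofFn]
  rfl
end Scratch

open Scratch in
/-- for `V` generated by Hamiltonians `H_j = G_j + ∑_T a_{j,T} Z_T`
with `G_j` Hermitian U(1)-invariant 2-local and `T` ranging over 3-element subsets,
`Δ3(V) ≡ -8 ∑_j ∑_T a_{j,T} (mod 2π)`. -/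
theorem stmt19 (n : ℕ) (hn : 2 ≤ n) (p : ℕ)
    (G : Fin p → Matrix (Fin n → Bool) (Fin n → Bool) ℂ)
    (a : Fin p → Finset (Fin n) → ℝ)
    (hherm : ∀ j, (G j).IsHermitian) (hU1 : ∀ j, U1Invariant (G j))
    (h2loc : ∀ j, KLocal 2 (G j))
    (H : Fin p → Matrix (Fin n → Bool) (Fin n → Bool) ℂ)
    (hH : ∀ j, H j = G j + ∑ T ∈ Finset.powersetCard 3 (Finset.univ : Finset (Fin n)),
        (a j T : ℂ) • Zmat n T)
    (V : Matrix (Fin n → Bool) (Fin n → Bool) ℂ)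
    (hV : V = (List.ofFn fun j => NormedSpace.exp ((-Complex.I) • H j)).prod) :
    Mod2Pi (Delta3 V)
      (-8 * ∑ j, ∑ T ∈ Finset.powersetCard 3 (Finset.univ : Finset (Fin n)), a j T) := by
  classical
  set pc3 := Finset.powersetCard 3 (Finset.univ : Finset (Fin n)) with hpc3
  have hZU1 : ∀ T : Finset (Fin n), U1Invariant (Zmat n T) := fun T => U1_diagonal _
  have hHU1 : ∀ j, U1Invariant (H j) := by
    intro j
    rw [hH j]
    exact U1_add (hU1 j) (U1_sum _ _ (fun T _ => U1_smul (hZU1 T) _))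
  have hHherm : ∀ j, (H j).IsHermitian := by
    intro j
    rw [hH j]
    apply (hherm j).add
    rw [Matrix.IsHermitian, Matrix.conjTranspose_sum]
    apply Finset.sum_congr rfl
    intro T _
    rw [Matrix.conjTranspose_smul, Zmat_isHermitian T, Complex.star_def, Complex.conj_ofReal]
  have hBherm : ∀ (j : Fin p) (m : ℕ), (block (H j) m).IsHermitian :=
    fun j m => block_isHermitian (hHherm j) m
  choose r hr1 hr2 using fun j m => det_exp_neg_I_smul (hBherm j m)
  set c : ℕ → ℝ := fun m => ∑ j, r j m with hc
  -- determinant of each block of V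
  have hdet : ∀ m, Matrix.det (block V m)
      = Complex.exp (((-(c m) : ℝ) : ℂ) * Complex.I) := by
    intro m
    have hU1exp : ∀ A ∈ (List.ofFn fun j => NormedSpace.exp ((-Complex.I) • H j)),
        U1Invariant A := by
      intro A hA
      rw [List.mem_ofFn] at hA
      obtain ⟨j, rfl⟩ := hA
      exact U1_exp (U1_smul (hHU1 j) _)
    rw [hV, block_list_prod m _ hU1exp, List.map_ofFn, det_list_ofFn]
    have hterm : ∀ j, Matrix.det
          (((fun A => block A m) ∘ fun j => NormedSpace.exp ((-Complex.I) • H j)) j)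
        = Complex.exp (((-(r j m) : ℝ) : ℂ) * Complex.I) := by
      intro j
      show Matrix.det (block (NormedSpace.exp ((-Complex.I) • H j)) m) = _
      rw [block_exp (U1_smul (hHU1 j) _) m, block_smul]
      exact hr2 j m
    rw [Finset.prod_congr rfl (fun j _ => hterm j), ← Complex.exp_sum]
    congr 1
    rw [← Finset.sum_mul]
    congr 1
    rw [hc]
    push_cast
    simp
  -- phases
  have htheta : ∀ m, ∃ k : ℤ, theta V m = -(c m) + 2 * Real.pi * k := by
    intro m
    rw [theta, hdet m]
    exact arg_exp_real_mul_I (-(c m))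
  obtain ⟨k3, hk3⟩ := htheta (n-1)
  obtain ⟨k1, hk1⟩ := htheta 1
  obtain ⟨kn, hkn⟩ := htheta n
  obtain ⟨k0, hk0⟩ := htheta 0
  -- the trace identity
  have htau : ∀ j, tauC (H j) = 8 * ∑ T ∈ pc3, (a j T : ℂ) := by
    intro j
    rw [hH j, tauC_add, tauC_of_KLocal hn (h2loc j), tauC_sum, zero_add]
    have hterm : ∀ T ∈ pc3, tauC ((a j T : ℂ) • Zmat n T) = (a j T : ℂ) * 8 := by
      intro T hT
      have hcard : T.card = 3 := (Finset.mem_powersetCard.mp hT).2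
      rw [tauC_smul, tauC_Zmat T hcard]
    rw [Finset.sum_congr rfl hterm, ← Finset.sum_mul, mul_comm]
  have hsum : ∑ j, tauC (H j)
      = Complex.ofReal (c (n-1) - c 1 - ((n:ℝ)-2) * (c n - c 0)) := by
    have hexp : ∀ j : Fin p, tauC (H j) = ((r j (n-1) : ℂ) - r j 1)
        - ((n:ℂ)-2) * ((r j n : ℂ) - r j 0) := by
      intro j
      unfold tauC
      rw [hr1, hr1, hr1, hr1]
    rw [Finset.sum_congr rfl (fun j _ => hexp j)]
    rw [Finset.sum_sub_distrib, Finset.sum_sub_distrib, ← Finset.mul_sum,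
      Finset.sum_sub_distrib]
    rw [hc]
    push_cast
    ring
  have hkey : c (n-1) - c 1 - ((n:ℝ)-2) * (c n - c 0)
      = 8 * ∑ j, ∑ T ∈ pc3, a j T := by
    apply Complex.ofReal_injective
    rw [← hsum, Finset.sum_congr rfl (fun j _ => htau j), ← Finset.mul_sum]
    push_cast
    ring
  refine ⟨k3 - k1 - ((n:ℤ) - 2) * (kn - k0), ?_⟩
  rw [Delta3, hk3, hk1, hkn, hk0]
  push_cast
  linear_combination -hkey
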